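/- arXiv:1501.00208 — 2 statements merged into one kernel-verified Lean document; each statement's English description precedes it below -/
import Mathlib

section
/- Let ϖ be the two-parameter EPPF ϖ(n₁,…,n_k) = ([θ+α]_{k-1;α} / [θ+1]_{n-1}) ∏_{i=1}^k [1-α]_{n_i-1}, where 0 ≤ α < 1, θ > -α, n = ∑ n_i, and [x]_{m;a} = x(x+a)⋯(x+(m-1)a) with [x]_{0;a} = 1 and [x]_m = [x]_{m;1}. Then ϖ(1) = 1 and ϖ(n) = ∑_{j=1}^{k+1} ϖ(n^{+j}) for every finite composition n. -/
/-- The generalized rising factorial `[x]_{m;a} = x (x+a) ⋯ (x+(m-1)a)`. -/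
noncomputable def risingFacStep (x a : ℝ) (m : ℕ) : ℝ := ∏ j ∈ Finset.range m, (x + j * a)

/-- The two-parameter (Pitman) EPPF applied to a composition given as a list of part sizes:
`ϖ(n₁,…,n_k) = ([θ+α]_{k-1;α} / [θ+1]_{n-1}) ∏_i [1-α]_{n_i-1}`. -/
noncomputable def tpEPPF (θ α : ℝ) (l : List ℕ) : ℝ :=
  (risingFacStep (θ + α) α (l.length - 1) / risingFacStep (θ + 1) 1 (l.sum - 1)) *
    (l.map (fun i => risingFacStep (1 - α) 1 (i - 1))).prod

lemma rfs_succ (x a : ℝ) (m : ℕ) :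
    risingFacStep x a (m + 1) = risingFacStep x a m * (x + m * a) := by
  simp [risingFacStep, Finset.prod_range_succ]

lemma rfs_zero (x a : ℝ) : risingFacStep x a 0 = 1 := by simp [risingFacStep]

lemma rfs_pos {x a : ℝ} (hx : 0 < x) (ha : 0 ≤ a) (m : ℕ) : 0 < risingFacStep x a m :=
  Finset.prod_pos fun j _ => by positivity

lemma sum_getD (l : List ℕ) : ∑ j ∈ Finset.range l.length, l.getD j 0 = l.sum := by
  induction l with
  | nil => simp
  | cons a t ih =>
    rw [List.length_cons, Finset.sum_range_succ' _ t.length]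
    simp only [List.getD_cons_succ, List.getD_cons_zero, ih, List.sum_cons]
    omega

lemma alg1 (A B T F D c s : ℝ) (hB : B ≠ 0) (hs : s ≠ 0) :
    A / (B * s) * (T * (F * c * D)) = A / B * (T * (F * D)) * (c / s) := by
  field_simp

lemma alg2 (A B P c s : ℝ) (hB : B ≠ 0) (hs : s ≠ 0) :
    A * c / (B * s) * (P * (1 * 1)) = A / B * P * (c / s) := by
  field_simp

lemma key_set (θ α : ℝ) (hθ1 : 0 < θ + 1)
    (t d : List ℕ) (x : ℕ) (hx : 1 ≤ x) :
    tpEPPF θ α (t ++ (x + 1) :: d) =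
      tpEPPF θ α (t ++ x :: d) * ((x - α) / (θ + (t ++ x :: d).sum)) := by
  have hS : 1 ≤ (t ++ x :: d).sum := by simp; omega
  have hsum : (t ++ (x + 1) :: d).sum = (t ++ x :: d).sum + 1 := by simp; ring
  have hlen : (t ++ (x + 1) :: d).length = (t ++ x :: d).length := by simp
  have hcast : (((t ++ x :: d).sum - 1 : ℕ) : ℝ) = ((t ++ x :: d).sum : ℝ) - 1 := by
    push_cast [Nat.cast_sub hS]; ring
  have hcastx : ((x - 1 : ℕ) : ℝ) = (x : ℝ) - 1 := by
    push_cast [Nat.cast_sub hx]; ring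
  have hden : risingFacStep (θ + 1) 1 (((t ++ x :: d).sum + 1) - 1)
      = risingFacStep (θ + 1) 1 ((t ++ x :: d).sum - 1) * (θ + (t ++ x :: d).sum) := by
    have h1 : (t ++ x :: d).sum + 1 - 1 = ((t ++ x :: d).sum - 1) + 1 := by omega
    rw [h1, rfs_succ, hcast]; ring_nf
  have hfx : risingFacStep (1 - α) 1 ((x + 1) - 1)
      = risingFacStep (1 - α) 1 (x - 1) * ((x : ℝ) - α) := by
    have h1 : x + 1 - 1 = (x - 1) + 1 := by omega
    rw [h1, rfs_succ, hcastx]; ring_nf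
  have hB : risingFacStep (θ + 1) 1 ((t ++ x :: d).sum - 1) ≠ 0 :=
    (rfs_pos hθ1 one_pos.le _).ne'
  have hθS : θ + ((t ++ x :: d).sum : ℝ) ≠ 0 := by
    have : (1 : ℝ) ≤ ((t ++ x :: d).sum : ℝ) := by exact_mod_cast hS
    nlinarith
  simp only [tpEPPF, hsum, hlen, hden, List.map_append, List.map_cons, List.prod_append,
    List.prod_cons, hfx]
  exact alg1 _ _ _ _ _ _ _ hB hθS

lemma key_app (θ α : ℝ) (hθ1 : 0 < θ + 1)
    (l : List ℕ) (hk : 1 ≤ l.length) (hS : 1 ≤ l.sum) :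
    tpEPPF θ α (l ++ [1]) =
      tpEPPF θ α l * ((θ + l.length * α) / (θ + l.sum)) := by
  have hsum : (l ++ [1]).sum = l.sum + 1 := by simp
  have hlen : (l ++ [1]).length = l.length + 1 := by simp
  have hcast : ((l.sum - 1 : ℕ) : ℝ) = (l.sum : ℝ) - 1 := by
    push_cast [Nat.cast_sub hS]; ring
  have hcastk : ((l.length - 1 : ℕ) : ℝ) = (l.length : ℝ) - 1 := by
    push_cast [Nat.cast_sub hk]; ring
  have hden : risingFacStep (θ + 1) 1 ((l.sum + 1) - 1)
      = risingFacStep (θ + 1) 1 (l.sum - 1) * (θ + l.sum) := by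
    have h1 : l.sum + 1 - 1 = (l.sum - 1) + 1 := by omega
    rw [h1, rfs_succ, hcast]; ring_nf
  have hnum : risingFacStep (θ + α) α ((l.length + 1) - 1)
      = risingFacStep (θ + α) α (l.length - 1) * (θ + l.length * α) := by
    have h1 : l.length + 1 - 1 = (l.length - 1) + 1 := by omega
    rw [h1, rfs_succ, hcastk]; ring_nf
  have hB : risingFacStep (θ + 1) 1 (l.sum - 1) ≠ 0 := (rfs_pos hθ1 one_pos.le _).ne'
  have hθS : θ + (l.sum : ℝ) ≠ 0 := by
    have : (1 : ℝ) ≤ (l.sum : ℝ) := by exact_mod_cast hS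
    nlinarith
  simp only [tpEPPF, hsum, hlen, hden, hnum, List.map_append, List.map_cons, List.map_nil,
    List.prod_append, List.prod_cons, List.prod_nil, Nat.sub_self, rfs_zero]
  exact alg2 _ _ _ _ _ hB hθS

/-- The two-parameter EPPF satisfies the EPPF consistency (addition) rule. -/
theorem tpEPPF_consistency (θ α : ℝ) (hα0 : 0 ≤ α) (hα1 : α < 1) (hθ : θ > -α) :
    tpEPPF θ α [1] = 1 ∧
      ∀ l : List ℕ, l ≠ [] → (∀ i ∈ l, 1 ≤ i) →
        tpEPPF θ α l =
          (∑ j ∈ Finset.range l.length, tpEPPF θ α (l.set j (l.getD j 0 + 1))) +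
            tpEPPF θ α (l ++ [1]) := by
  have hθ1 : 0 < θ + 1 := by linarith
  constructor
  · simp [tpEPPF, rfs_zero]
  intro l hl hone
  have hk : 1 ≤ l.length := List.length_pos_iff.mpr hl
  have hS : 1 ≤ l.sum := by
    rcases l with _ | ⟨a, t⟩
    · exact absurd rfl hl
    · have := hone a (by simp); simp; omega
  have hθS : θ + (l.sum : ℝ) ≠ 0 := by
    have : (1 : ℝ) ≤ (l.sum : ℝ) := by exact_mod_cast hS
    nlinarith
  have hset : ∀ j ∈ Finset.range l.length,
      tpEPPF θ α (l.set j (l.getD j 0 + 1)) =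
        tpEPPF θ α l * (((l.getD j 0 : ℝ) - α) / (θ + l.sum)) := by
    intro j hj
    rw [Finset.mem_range] at hj
    have hgd : l.getD j 0 = l[j] := List.getD_eq_getElem l 0 hj
    have hdec : l = l.take j ++ l[j] :: l.drop (j + 1) := by
      conv_lhs => rw [← List.take_append_drop j l]
      rw [List.drop_eq_getElem_cons hj]
    have hx : 1 ≤ l[j] := hone _ (List.getElem_mem hj)
    calc tpEPPF θ α (l.set j (l.getD j 0 + 1))
        = tpEPPF θ α (l.take j ++ (l[j] + 1) :: l.drop (j + 1)) := by
          rw [hgd, List.set_eq_take_cons_drop _ hj]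
      _ = tpEPPF θ α (l.take j ++ l[j] :: l.drop (j + 1)) *
            (((l[j] : ℝ) - α) / (θ + ((l.take j ++ l[j] :: l.drop (j + 1)).sum : ℝ))) :=
          key_set θ α hθ1 _ _ _ hx
      _ = tpEPPF θ α l * (((l.getD j 0 : ℝ) - α) / (θ + l.sum)) := by
          rw [← hdec, ← hgd]
  rw [Finset.sum_congr rfl hset, key_app θ α hθ1 l hk hS]
  have hsum : ∑ j ∈ Finset.range l.length, (((l.getD j 0 : ℝ)) - α)
      = (l.sum : ℝ) - l.length * α := by
    rw [Finset.sum_sub_distrib]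
    simp only [Finset.sum_const, Finset.card_range, nsmul_eq_mul]
    congr 1
    rw [← Nat.cast_sum, sum_getD]
  have step : ∀ j ∈ Finset.range l.length,
      tpEPPF θ α l * (((l.getD j 0 : ℝ) - α) / (θ + l.sum)) =
        tpEPPF θ α l * ((l.getD j 0 : ℝ) - α) / (θ + l.sum) := by
    intro j _; ring
  rw [Finset.sum_congr rfl step, ← Finset.sum_div, ← Finset.mul_sum, hsum]
  have h1 : ((l.sum : ℝ) - l.length * α) / (θ + l.sum) + (θ + l.length * α) / (θ + l.sum)
      = 1 := by
    rw [← add_div, div_eq_one_iff_eq hθS]; ring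
  rw [mul_div_assoc, ← mul_add, h1, mul_one]
end

section
/- Let Π be an exchangeable random partition of ℕ with blocks labelled in order of appearance, let N_{1n} = |[n] ∩ C₁| be the size of the block containing 1 among the first n integers, and let K_n be the number of blocks of Π restricted to [n]. Then for all 1 ≤ k ≤ n: (a) Pr{N₁ₖ = k ∧ N₁ₙ = k} = (n-1 choose k-1)^{-1} Pr{N₁ₙ = k}; and (b) Pr{N₁ₙ = 1} = Pr{K_n > K_{n-1}}. -/
open MeasureTheory

/-- `blockOneCount X n ω` = `N_{1n}`, the number of elements of `{0,…,n-1}` (representing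
`[n] = {1,…,n}`) in the block of the first element `0`. -/
def blockOneCount {Ω : Type*} (X : Ω → ℕ → ℕ → Bool) (n : ℕ) (ω : Ω) : ℕ :=
  ((Finset.range n).filter (fun i => X ω 0 i = true)).card

/-- `numBlocks X n ω` = `K_n`, the number of blocks of the partition restricted to the
first `n` elements (an element opens a new block iff it is related to no earlier one). -/
def numBlocks {Ω : Type*} (X : Ω → ℕ → ℕ → Bool) (n : ℕ) (ω : Ω) : ℕ :=
  ((Finset.range n).filter (fun i => ∀ j ∈ Finset.range i, X ω i j = false)).card


lemma meas_eval (a b : ℕ) : Measurable fun f : ℕ → ℕ → Bool => f a b :=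
  (measurable_pi_apply b).comp (measurable_pi_apply a)

lemma exists_perm_image (S : Finset ℕ) :
    ∀ m (A B : Finset ℕ), (A \ B).card = m → A ⊆ S → B ⊆ S → A.card = B.card →
    ∃ σ : Equiv.Perm ℕ, (∀ x ∉ S, σ x = x) ∧ A.image σ = B := by
  intro m
  induction m using Nat.strong_induction_on with
  | _ m ih =>
    intro A B hm hAS hBS hcard
    by_cases hAB : A = B
    · exact ⟨1, fun x _ => rfl, by simpa using hAB⟩
    · have h1 : (A \ B).Nonempty := by
        rw [Finset.nonempty_iff_ne_empty]
        intro h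
        exact hAB (Finset.eq_of_subset_of_card_le
          (fun x hx => by
            by_contra hxB
            exact absurd (Finset.mem_sdiff.2 ⟨hx, hxB⟩) (by simp [h])) hcard.ge)
      obtain ⟨a, ha⟩ := h1
      have h2 : (B \ A).Nonempty := by
        rw [← Finset.card_pos, ← Finset.card_sdiff_comm hcard, Finset.card_pos]
        exact ⟨a, ha⟩
      obtain ⟨b, hb⟩ := h2
      have haA : a ∈ A := (Finset.mem_sdiff.1 ha).1
      have haB : a ∉ B := (Finset.mem_sdiff.1 ha).2
      have hbB : b ∈ B := (Finset.mem_sdiff.1 hb).1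
      have hbA : b ∉ A := (Finset.mem_sdiff.1 hb).2
      set A₁ := insert b (A.erase a) with hA₁
      have himg : A.image (Equiv.swap a b) = A₁ := by
        ext x
        simp only [hA₁, Finset.mem_image, Finset.mem_insert, Finset.mem_erase]
        constructor
        · rintro ⟨y, hy, rfl⟩
          rcases eq_or_ne y a with rfl | hya
          · left; rw [Equiv.swap_apply_left]
          · rcases eq_or_ne y b with rfl | hyb
            · exact absurd hy hbA
            · right; rw [Equiv.swap_apply_of_ne_of_ne hya hyb]; exact ⟨hya, hy⟩
        · rintro (h | ⟨hxa, hxA⟩)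
          · exact ⟨a, haA, h ▸ Equiv.swap_apply_left a b⟩
          · refine ⟨x, hxA, ?_⟩
            rcases eq_or_ne x b with rfl | hxb
            · exact absurd hxA hbA
            · exact Equiv.swap_apply_of_ne_of_ne hxa hxb
      have hA₁S : A₁ ⊆ S :=
        Finset.insert_subset (hBS hbB) ((Finset.erase_subset _ _).trans hAS)
      have hA₁card : A₁.card = B.card := by
        rw [hA₁, Finset.card_insert_of_notMem (fun h => hbA (Finset.mem_of_mem_erase h)),
          Finset.card_erase_of_mem haA, ← hcard]
        have : 1 ≤ A.card := Finset.card_pos.2 ⟨a, haA⟩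
        omega
      have hsd : A₁ \ B = (A \ B).erase a := by
        ext x
        simp only [hA₁, Finset.mem_sdiff, Finset.mem_insert, Finset.mem_erase]
        constructor
        · rintro ⟨rfl | ⟨hxa, hxA⟩, hxB⟩
          · exact absurd hbB hxB
          · exact ⟨hxa, hxA, hxB⟩
        · rintro ⟨hxa, hxA, hxB⟩
          exact ⟨Or.inr ⟨hxa, hxA⟩, hxB⟩
      have hlt : (A₁ \ B).card < m := by
        rw [hsd, Finset.card_erase_of_mem ha, hm]
        have : 1 ≤ m := hm ▸ Finset.card_pos.2 ⟨a, ha⟩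
        omega
      obtain ⟨σ', hσ'fix, hσ'img⟩ := ih _ hlt A₁ B rfl hA₁S hBS hA₁card
      refine ⟨(Equiv.swap a b).trans σ', fun x hx => ?_, ?_⟩
      · have : Equiv.swap a b x = x :=
          Equiv.swap_apply_of_ne_of_ne (fun h => hx (h ▸ hAS haA))
            (fun h => hx (h ▸ hBS hbB))
        simp [Equiv.trans_apply, this, hσ'fix x hx]
      · rw [Equiv.coe_trans, ← Finset.image_image, himg, hσ'img]

lemma measure_perm {Ω : Type*} [MeasurableSpace Ω] (μ : Measure Ω)
    (X : Ω → ℕ → ℕ → Bool) (hXmeas : Measurable X)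
    (hexch : ∀ σ : Equiv.Perm ℕ,
      Measure.map X μ = Measure.map (fun ω i j => X ω (σ i) (σ j)) μ)
    (σ : Equiv.Perm ℕ) (C : Set (ℕ → ℕ → Bool)) (hC : MeasurableSet C) :
    μ (X ⁻¹' C) = μ ((fun ω i j => X ω (σ i) (σ j)) ⁻¹' C) := by
  have hY : Measurable fun ω i j => X ω (σ i) (σ j) := by
    apply measurable_pi_lambda; intro i; apply measurable_pi_lambda; intro j
    exact (meas_eval (σ i) (σ j)).comp hXmeas
  rw [← Measure.map_apply hXmeas hC, hexch σ, Measure.map_apply hY hC]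

lemma measSet_C (s : Finset ℕ) (a : ℕ) (c : ℕ → Bool) :
    MeasurableSet {f : ℕ → ℕ → Bool | ∀ i ∈ s, f a i = c i} := by
  have : {f : ℕ → ℕ → Bool | ∀ i ∈ s, f a i = c i}
      = ⋂ i ∈ s, {f : ℕ → ℕ → Bool | f a i = c i} := by
    ext f; simp
  rw [this]
  exact MeasurableSet.biInter s.countable_toSet
    (fun i _ => (meas_eval a i) (measurableSet_singleton (c i)))

lemma bool_ite_iff (b : Bool) (P : Prop) [Decidable P] :
    b = (if P then true else false) ↔ (b = true ↔ P) := by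
  by_cases h : P <;> simp [h]

lemma perm_fix_zero {n : ℕ} (σ : Equiv.Perm ℕ) (hfix : ∀ x ∉ Finset.Ico 1 n, σ x = x) :
    σ 0 = 0 :=
  hfix 0 (by simp)

lemma perm_fix_lt {n : ℕ} (σ : Equiv.Perm ℕ) (hfix : ∀ x ∉ Finset.Ico 1 n, σ x = x) :
    ∀ i, i < n ↔ σ i < n := by
  have hmaps : ∀ i ∈ Finset.Ico 1 n, σ i ∈ Finset.Ico 1 n := by
    intro i hi
    by_contra h
    have h1 : σ (σ i) = σ i := hfix _ h
    have h2 : σ i = i := σ.injective h1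
    exact h (by rw [h2]; exact hi)
  intro i
  constructor
  · intro hi
    rcases Nat.eq_zero_or_pos i with rfl | hpos
    · rw [perm_fix_zero σ hfix]; exact hi
    · exact (Finset.mem_Ico.1 (hmaps i (Finset.mem_Ico.2 ⟨hpos, hi⟩))).2
  · intro hi
    by_contra h
    rw [hfix i (by simp [Finset.mem_Ico]; omega)] at hi
    omega

lemma mem_image_perm {T : Finset ℕ} {σ : Equiv.Perm ℕ} {j : ℕ} :
    j ∈ T.image σ ↔ σ.symm j ∈ T := by
  simp only [Finset.mem_image]
  constructor
  · rintro ⟨t, ht, rfl⟩; simpa using ht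
  · intro h; exact ⟨σ.symm j, h, σ.apply_symm_apply j⟩

lemma key_pullback {Ω : Type*} (X : Ω → ℕ → ℕ → Bool) (n : ℕ) (T : Finset ℕ)
    (σ : Equiv.Perm ℕ) (hfix : ∀ x ∉ Finset.Ico 1 n, σ x = x) :
    ((fun ω i j => X ω (σ i) (σ j)) ⁻¹'
        {f | ∀ i ∈ Finset.range n, f 0 i = if i ∈ T then true else false})
      = X ⁻¹' {f | ∀ i ∈ Finset.range n, f 0 i = if i ∈ T.image σ then true else false} := by
  have h0 := perm_fix_zero σ hfix
  have hlt := perm_fix_lt σ hfix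
  ext ω
  simp only [Set.mem_preimage, Set.mem_setOf_eq, Finset.mem_range]
  constructor
  · intro h j hj
    have hij : σ (σ.symm j) = j := σ.apply_symm_apply j
    have hi : σ.symm j < n := by
      rw [hlt (σ.symm j), hij]; exact hj
    have h2 := h (σ.symm j) hi
    rw [h0, hij] at h2
    rw [h2]
    exact if_congr mem_image_perm.symm rfl rfl
  · intro h i hi
    rw [h0]
    have h2 := h (σ i) ((hlt i).1 hi)
    rw [h2]
    exact if_congr (by rw [mem_image_perm, σ.symm_apply_apply]) rfl rfl


lemma part_a {Ω : Type*} [MeasurableSpace Ω] (μ : Measure Ω) [IsProbabilityMeasure μ]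
    (X : Ω → ℕ → ℕ → Bool) (hXmeas : Measurable X)
    (hequiv : ∀ᵐ ω ∂μ, Equivalence (fun i j => X ω i j = true))
    (hexch : ∀ σ : Equiv.Perm ℕ,
      Measure.map X μ = Measure.map (fun ω i j => X ω (σ i) (σ j)) μ)
    (n k : ℕ) (hk : 1 ≤ k) (hkn : k ≤ n) :
    (μ {ω | blockOneCount X k ω = k ∧ blockOneCount X n ω = k}).toReal =
      (((n - 1).choose (k - 1) : ℝ))⁻¹ * (μ {ω | blockOneCount X n ω = k}).toReal := by
  have hn : 1 ≤ n := hk.trans hkn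
  set C : Finset ℕ → Set (ℕ → ℕ → Bool) :=
    fun T => {f | ∀ i ∈ Finset.range n, f 0 i = if i ∈ T then true else false} with hC
  set P : Finset ℕ → Set Ω := fun T => X ⁻¹' C T with hP
  set 𝒯 : Finset (Finset ℕ) := ((Finset.Ico 1 n).powersetCard (k-1)).image (insert 0) with h𝒯
  have hTfacts : ∀ T ∈ 𝒯, 0 ∈ T ∧ T ⊆ Finset.range n ∧ T.card = k ∧
      T.erase 0 ⊆ Finset.Ico 1 n ∧ (T.erase 0).card = k - 1 := by
    intro T hT
    simp only [h𝒯, Finset.mem_image] at hT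
    obtain ⟨S, hS, rfl⟩ := hT
    rw [Finset.mem_powersetCard] at hS
    have h0S : 0 ∉ S := fun h => by
      have := hS.1 h; rw [Finset.mem_Ico] at this; omega
    have he : (insert 0 S).erase 0 = S := Finset.erase_insert h0S
    refine ⟨Finset.mem_insert_self _ _, ?_, ?_, ?_, ?_⟩
    · intro x hx
      rcases Finset.mem_insert.1 hx with rfl | hx
      · exact Finset.mem_range.2 hn
      · have := hS.1 hx; rw [Finset.mem_Ico] at this
        rw [Finset.mem_range]; omega
    · rw [Finset.card_insert_of_notMem h0S, hS.2]; omega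
    · rw [he]; exact hS.1
    · rw [he]; exact hS.2
  have hmemP : ∀ (T : Finset ℕ), T ⊆ Finset.range n → ∀ ω : Ω,
      (ω ∈ P T ↔ (Finset.range n).filter (fun i => X ω 0 i = true) = T) := by
    intro T hT ω
    simp only [hP, hC, Set.mem_preimage, Set.mem_setOf_eq]
    constructor
    · intro h
      ext i
      simp only [Finset.mem_filter, Finset.mem_range]
      constructor
      · rintro ⟨hi, hXi⟩
        have h2 := h i (Finset.mem_range.2 hi)
        rw [hXi] at h2
        by_contra hT'
        simp [hT'] at h2
      · intro hiT
        have hi := Finset.mem_range.1 (hT hiT)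
        have h2 := h i (Finset.mem_range.2 hi)
        simp only [hiT, if_true] at h2
        exact ⟨hi, h2⟩
    · intro h i hi
      by_cases hiT : i ∈ T
      · simp only [hiT, if_true]
        have h2 : i ∈ (Finset.range n).filter (fun i => X ω 0 i = true) := by
          rw [h]; exact hiT
        exact (Finset.mem_filter.1 h2).2
      · simp only [hiT, if_false]
        have h2 : i ∉ (Finset.range n).filter (fun i => X ω 0 i = true) := by
          rw [h]; exact hiT
        simp only [Finset.mem_filter, not_and] at h2
        have h3 := h2 hi
        cases hX : X ω 0 i
        · rfl
        · exact absurd hX h3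
  have hPmeas : ∀ T, MeasurableSet (P T) :=
    fun T => hXmeas (measSet_C (Finset.range n) 0 (fun i => if i ∈ T then true else false))
  have hdisj : (↑𝒯 : Set (Finset ℕ)).PairwiseDisjoint P := by
    intro T₁ h₁ T₂ h₂ hne
    rw [Function.onFun, Set.disjoint_left]
    intro ω hω₁ hω₂
    exact hne (((hmemP T₁ (hTfacts T₁ h₁).2.1 ω).1 hω₁).symm.trans
      ((hmemP T₂ (hTfacts T₂ h₂).2.1 ω).1 hω₂))
  have hrefl : ∀ᵐ ω ∂μ, X ω 0 0 = true := by
    filter_upwards [hequiv] with ω h using h.refl 0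
  have hae : {ω | blockOneCount X n ω = k} =ᵐ[μ] ⋃ T ∈ 𝒯, P T := by
    rw [Filter.eventuallyEq_set]
    filter_upwards [hrefl] with ω hω
    simp only [Set.mem_setOf_eq, Set.mem_iUnion, exists_prop]
    constructor
    · intro hcard
      have hcard' : ((Finset.range n).filter (fun i => X ω 0 i = true)).card = k := hcard
      set F := (Finset.range n).filter (fun i => X ω 0 i = true) with hF
      have h0F : 0 ∈ F := Finset.mem_filter.2 ⟨Finset.mem_range.2 hn, hω⟩
      have hFT : F ∈ 𝒯 := by
        simp only [h𝒯, Finset.mem_image]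
        refine ⟨F.erase 0, Finset.mem_powersetCard.2 ⟨?_, ?_⟩, Finset.insert_erase h0F⟩
        · intro x hx
          have hx1 := Finset.mem_of_mem_erase hx
          have hx2 := Finset.ne_of_mem_erase hx
          have hx3 := Finset.mem_range.1 (Finset.mem_filter.1 hx1).1
          rw [Finset.mem_Ico]; omega
        · rw [Finset.card_erase_of_mem h0F, hcard']
      exact ⟨F, hFT, (hmemP F (hTfacts F hFT).2.1 ω).2 rfl⟩
    · rintro ⟨T, hT, hωT⟩
      have h2 := (hmemP T (hTfacts T hT).2.1 ω).1 hωT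
      show ((Finset.range n).filter (fun i => X ω 0 i = true)).card = k
      rw [h2, (hTfacts T hT).2.2.1]
  have heq : ∀ T ∈ 𝒯, μ (P T) = μ (P (Finset.range k)) := by
    intro T hT
    obtain ⟨h0T, hTsub, hTcard, hTe_sub, hTe_card⟩ := hTfacts T hT
    have hIco : Finset.Ico 1 k ⊆ Finset.Ico 1 n := Finset.Ico_subset_Ico le_rfl hkn
    obtain ⟨σ, hfix, himg⟩ := exists_perm_image (Finset.Ico 1 n) _ (T.erase 0)
      (Finset.Ico 1 k) rfl hTe_sub hIco (by rw [hTe_card, Nat.card_Ico])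
    have himgT : T.image σ = Finset.range k := by
      have h3 : T = insert 0 (T.erase 0) := (Finset.insert_erase h0T).symm
      rw [h3, Finset.image_insert, perm_fix_zero σ hfix, himg]
      ext x
      simp only [Finset.mem_insert, Finset.mem_Ico, Finset.mem_range]
      omega
    calc μ (P T) = μ ((fun ω i j => X ω (σ i) (σ j)) ⁻¹' C T) :=
          measure_perm μ X hXmeas hexch σ (C T)
            (measSet_C (Finset.range n) 0 (fun i => if i ∈ T then true else false))
      _ = μ (X ⁻¹' C (T.image σ)) := by rw [key_pullback X n T σ hfix]
      _ = μ (P (Finset.range k)) := by rw [himgT]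
  have hcard𝒯 : 𝒯.card = (n-1).choose (k-1) := by
    rw [h𝒯, Finset.card_image_of_injOn, Finset.card_powersetCard, Nat.card_Ico]
    intro S₁ h₁ S₂ h₂ he
    have h01 : 0 ∉ S₁ := fun h => by
      have := (Finset.mem_powersetCard.1 (by simpa using h₁)).1 h
      rw [Finset.mem_Ico] at this; omega
    have h02 : 0 ∉ S₂ := fun h => by
      have := (Finset.mem_powersetCard.1 (by simpa using h₂)).1 h
      rw [Finset.mem_Ico] at this; omega
    rw [← Finset.erase_insert h01, he, Finset.erase_insert h02]
  have hjoint : {ω | blockOneCount X k ω = k ∧ blockOneCount X n ω = k}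
      = P (Finset.range k) := by
    ext ω
    simp only [Set.mem_setOf_eq]
    rw [hmemP (Finset.range k) (Finset.range_subset_range.2 hkn) ω]
    constructor
    · rintro ⟨h1, h2⟩
      have h1' : ((Finset.range k).filter (fun i => X ω 0 i = true)).card = k := h1
      have h2' : ((Finset.range n).filter (fun i => X ω 0 i = true)).card = k := h2
      have hsub : (Finset.range k).filter (fun i => X ω 0 i = true) = Finset.range k :=
        Finset.eq_of_subset_of_card_le (Finset.filter_subset _ _)
          (by rw [Finset.card_range, h1'])
      have hsub2 : Finset.range k ⊆ (Finset.range n).filter (fun i => X ω 0 i = true) := by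
        rw [← hsub]
        exact Finset.filter_subset_filter _ (Finset.range_subset_range.2 hkn)
      exact (Finset.eq_of_subset_of_card_le hsub2
        (by rw [Finset.card_range, h2'])).symm
    · intro h
      have hk' : ∀ i < k, X ω 0 i = true := by
        intro i hi
        have : i ∈ (Finset.range n).filter (fun i => X ω 0 i = true) := by
          rw [h]; exact Finset.mem_range.2 hi
        exact (Finset.mem_filter.1 this).2
      constructor
      · show ((Finset.range k).filter (fun i => X ω 0 i = true)).card = k
        have : (Finset.range k).filter (fun i => X ω 0 i = true) = Finset.range k := by
          ext i
          simp only [Finset.mem_filter, Finset.mem_range]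
          exact ⟨fun h => h.1, fun hi => ⟨hi, hk' i hi⟩⟩
        rw [this, Finset.card_range]
      · show ((Finset.range n).filter (fun i => X ω 0 i = true)).card = k
        rw [h, Finset.card_range]
  have hsum : μ {ω | blockOneCount X n ω = k} = 𝒯.card • μ (P (Finset.range k)) := by
    rw [measure_congr hae, measure_biUnion_finset hdisj (fun T _ => hPmeas T),
      Finset.sum_congr rfl (fun T hT => heq T hT), Finset.sum_const]
  rw [hjoint, hsum, hcard𝒯, nsmul_eq_mul, ENNReal.toReal_mul, ENNReal.toReal_natCast]
  have hpos : 0 < (n-1).choose (k-1) := Nat.choose_pos (by omega)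
  have hne : (((n-1).choose (k-1) : ℕ) : ℝ) ≠ 0 := Nat.cast_ne_zero.2 hpos.ne'
  rw [inv_mul_cancel_left₀ hne]

def shiftPerm (n : ℕ) : Equiv.Perm ℕ where
  toFun i := if i = 0 then n - 1 else if i < n then i - 1 else i
  invFun j := if j = n - 1 then 0 else if j < n then j + 1 else j
  left_inv i := by
    dsimp only
    split_ifs <;> omega
  right_inv j := by
    dsimp only
    split_ifs <;> first | contradiction | omega

lemma shiftPerm_apply (n x : ℕ) :
    shiftPerm n x = if x = 0 then n - 1 else if x < n then x - 1 else x := by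
  rfl

lemma part_b {Ω : Type*} [MeasurableSpace Ω] (μ : Measure Ω) [IsProbabilityMeasure μ]
    (X : Ω → ℕ → ℕ → Bool) (hXmeas : Measurable X)
    (hequiv : ∀ᵐ ω ∂μ, Equivalence (fun i j => X ω i j = true))
    (hexch : ∀ σ : Equiv.Perm ℕ,
      Measure.map X μ = Measure.map (fun ω i j => X ω (σ i) (σ j)) μ)
    (n : ℕ) (hn : 1 ≤ n) :
    μ {ω | blockOneCount X n ω = 1} =
      μ {ω | numBlocks X n ω > numBlocks X (n - 1) ω} := by
  set CA : Set (ℕ → ℕ → Bool) := {f | ∀ i ∈ Finset.Ico 1 n, f 0 i = false} with hCA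
  set CB : Set (ℕ → ℕ → Bool) :=
    {f | ∀ j ∈ Finset.range (n-1), f (n-1) j = false} with hCB
  have hCAmeas : MeasurableSet CA := measSet_C (Finset.Ico 1 n) 0 (fun _ => false)
  have hrefl : ∀ᵐ ω ∂μ, X ω 0 0 = true := by
    filter_upwards [hequiv] with ω h using h.refl 0
  -- step 1
  have hstep1 : μ {ω | blockOneCount X n ω = 1} = μ (X ⁻¹' CA) := by
    apply measure_congr
    rw [Filter.eventuallyEq_set]
    filter_upwards [hrefl] with ω hω
    simp only [Set.mem_setOf_eq, Set.mem_preimage, hCA]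
    constructor
    · intro h
      have h' : ((Finset.range n).filter (fun i => X ω 0 i = true)).card = 1 := h
      obtain ⟨a, ha⟩ := Finset.card_eq_one.1 h'
      have h0 : (0 : ℕ) ∈ (Finset.range n).filter (fun i => X ω 0 i = true) :=
        Finset.mem_filter.2 ⟨Finset.mem_range.2 hn, hω⟩
      have ha0 : a = 0 := by
        rw [ha] at h0; exact (Finset.mem_singleton.1 h0).symm
      intro i hi
      rw [Finset.mem_Ico] at hi
      have : i ∉ (Finset.range n).filter (fun i => X ω 0 i = true) := by
        rw [ha, ha0, Finset.mem_singleton]; omega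
      simp only [Finset.mem_filter, Finset.mem_range, not_and] at this
      have h2 := this hi.2
      cases hX : X ω 0 i
      · rfl
      · exact absurd hX h2
    · intro h
      show ((Finset.range n).filter (fun i => X ω 0 i = true)).card = 1
      have : (Finset.range n).filter (fun i => X ω 0 i = true) = {0} := by
        ext i
        simp only [Finset.mem_filter, Finset.mem_range, Finset.mem_singleton]
        constructor
        · rintro ⟨hi, hX⟩
          by_contra hi0
          have := h i (Finset.mem_Ico.2 ⟨by omega, hi⟩)
          rw [hX] at this
          simp at this
        · rintro rfl
          exact ⟨hn, hω⟩
      rw [this, Finset.card_singleton]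
  -- step 2
  have hstep2 : μ (X ⁻¹' CA) = μ (X ⁻¹' CB) := by
    rw [measure_perm μ X hXmeas hexch (shiftPerm n) CA hCAmeas]
    congr 1
    ext ω
    simp only [Set.mem_preimage, Set.mem_setOf_eq, hCA, hCB]
    have hz : shiftPerm n 0 = n - 1 := by rw [shiftPerm_apply]; simp
    constructor
    · intro h j hj
      rw [Finset.mem_range] at hj
      have h2 := h (j+1) (Finset.mem_Ico.2 ⟨by omega, by omega⟩)
      rw [hz] at h2
      have : shiftPerm n (j+1) = j := by
        rw [shiftPerm_apply]; split_ifs <;> first | contradiction | omega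
      rwa [this] at h2
    · intro h i hi
      rw [Finset.mem_Ico] at hi
      rw [hz]
      have : shiftPerm n i = i - 1 := by
        rw [shiftPerm_apply]; split_ifs <;> first | contradiction | omega
      rw [this]
      exact h (i-1) (Finset.mem_range.2 (by omega))
  -- step 3
  have hstep3 : X ⁻¹' CB = {ω | numBlocks X n ω > numBlocks X (n - 1) ω} := by
    ext ω
    simp only [Set.mem_preimage, Set.mem_setOf_eq, hCB, gt_iff_lt]
    have hrange : Finset.range n = insert (n-1) (Finset.range (n-1)) := by
      rw [← Finset.range_add_one]
      congr 1
      omega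
    have hnot : (n-1) ∉ (Finset.range (n-1)).filter
        (fun i => ∀ j ∈ Finset.range i, X ω i j = false) := by
      intro h
      have := Finset.mem_range.1 (Finset.mem_filter.1 h).1
      omega
    constructor
    · intro hQ
      show numBlocks X (n-1) ω <
        ((Finset.range n).filter (fun i => ∀ j ∈ Finset.range i, X ω i j = false)).card
      rw [hrange, Finset.filter_insert, if_pos hQ, Finset.card_insert_of_notMem hnot]
      exact Nat.lt_succ_self _
    · intro hlt
      by_contra hQ
      have h2 : numBlocks X n ω = numBlocks X (n-1) ω := by
        show ((Finset.range n).filter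
          (fun i => ∀ j ∈ Finset.range i, X ω i j = false)).card = _
        rw [hrange, Finset.filter_insert, if_neg hQ]
        rfl
      omega
  rw [hstep1, hstep2, hstep3]

theorem exchangeable_partition_identities
    {Ω : Type*} [MeasurableSpace Ω] (μ : Measure Ω) [IsProbabilityMeasure μ]
    (X : Ω → ℕ → ℕ → Bool) (hXmeas : Measurable X)
    (hequiv : ∀ᵐ ω ∂μ, Equivalence (fun i j => X ω i j = true))
    (hexch : ∀ σ : Equiv.Perm ℕ,
      Measure.map X μ = Measure.map (fun ω i j => X ω (σ i) (σ j)) μ)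
    (n k : ℕ) (hk : 1 ≤ k) (hkn : k ≤ n) :
    (μ {ω | blockOneCount X k ω = k ∧ blockOneCount X n ω = k}).toReal =
        (((n - 1).choose (k - 1) : ℝ))⁻¹ * (μ {ω | blockOneCount X n ω = k}).toReal ∧
      μ {ω | blockOneCount X n ω = 1} =
        μ {ω | numBlocks X n ω > numBlocks X (n - 1) ω} := by
  exact ⟨part_a μ X hXmeas hequiv hexch n k hk hkn,
    part_b μ X hXmeas hequiv hexch n (hk.trans hkn)⟩
end
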